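/- For every real number x > 0 and every real number A > 1, one has e^(x/2) + A − A·e^(x/(2A)) − e^((x/2)·(1/A − 1)) > 0. (This is the function F(x) whose positivity is proved by showing F(0) = 0 and F'(x) = (1/2)(e^(x/2) − e^(x/(2A))) + (1/2)(1 − 1/A)·e^((x/2)(1/A − 1)) > 0 for x > 0.) -/

import Mathlib

open Real

theorem F_positive (x A : ℝ) (hx : 0 < x) (hA : 1 < A) :
    Real.exp (x / 2) + A - A * Real.exp (x / (2 * A)) -
      Real.exp ((x / 2) * (1 / A - 1)) > 0 := by
  have hA0 : (0:ℝ) < A := lt_trans one_pos hA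
  set c1 : ℝ := 1/2 with hc1
  set c2 : ℝ := 1/(2*A) with hc2
  set c3 : ℝ := (1/A - 1)/2 with hc3
  set f : ℝ → ℝ := fun t => Real.exp (t*c1) + A - A * Real.exp (t*c2) - Real.exp (t*c3)
    with hf
  have hderiv : ∀ t : ℝ, HasDerivAt f
      (Real.exp (t*c1)*c1 - A * (Real.exp (t*c2)*c2) - Real.exp (t*c3)*c3) t := by
    intro t
    have h1 : HasDerivAt (fun t : ℝ => Real.exp (t*c1)) (Real.exp (t*c1)*c1) t :=
      by have := (Real.hasDerivAt_exp (t*c1)).comp t (hasDerivAt_mul_const c1); exact this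
    have h2 : HasDerivAt (fun t : ℝ => Real.exp (t*c2)) (Real.exp (t*c2)*c2) t :=
      by have := (Real.hasDerivAt_exp (t*c2)).comp t (hasDerivAt_mul_const c2); exact this
    have h3 : HasDerivAt (fun t : ℝ => Real.exp (t*c3)) (Real.exp (t*c3)*c3) t :=
      by have := (Real.hasDerivAt_exp (t*c3)).comp t (hasDerivAt_mul_const c3); exact this
    exact ((h1.add_const A).sub (h2.const_mul A)).sub h3
  have hmono : StrictMonoOn f (Set.Ici (0:ℝ)) := by
    apply strictMonoOn_of_deriv_pos (convex_Ici 0)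
    · exact (Continuous.continuousOn (by fun_prop))
    · intro t ht
      rw [interior_Ici] at ht
      rw [(hderiv t).deriv]
      have hc2' : c2 * A = c1 := by
        rw [hc1, hc2, div_mul_eq_mul_div, one_mul, div_eq_div_iff (ne_of_gt (by linarith)) (by norm_num)]
        ring
      have h12 : Real.exp (t*c2) < Real.exp (t*c1) := by
        apply Real.exp_lt_exp.2
        apply mul_lt_mul_of_pos_left _ ht
        rw [hc1, hc2]
        rw [div_lt_div_iff₀ (by positivity) (by norm_num)]
        linarith
      have h3neg : c3 < 0 := by
        rw [hc3]
        have : 1/A < 1 := by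
          rw [div_lt_one hA0]; exact hA
        linarith
      have hAc2 : A * (Real.exp (t*c2)*c2) = Real.exp (t*c2) * c1 := by
        rw [← hc2']; ring
      rw [hAc2]
      have h1 : 0 < Real.exp (t*c1)*c1 - Real.exp (t*c2)*c1 := by
        have : (0:ℝ) < c1 := by norm_num [hc1]
        nlinarith
      have h2 : 0 < - (Real.exp (t*c3)*c3) := by
        have := Real.exp_pos (t*c3)
        nlinarith
      linarith
  have h0 : f 0 = 0 := by simp [hf]
  have hfx : 0 < f x := by
    have := hmono (Set.self_mem_Ici) (Set.mem_Ici.2 hx.le) hx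
    rwa [h0] at this
  have heq : f x = Real.exp (x / 2) + A - A * Real.exp (x / (2 * A)) -
      Real.exp ((x / 2) * (1 / A - 1)) := by
    rw [hf, hc1, hc2, hc3]
    ring_nf
  linarith [heq ▸ hfx]
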